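/- arXiv:1807.01744 — 2 statements merged into one kernel-verified Lean document; each statement's English description precedes it below -/
import Mathlib

section
/- Let K be a number field and set Y = Y(X) := exp((log X)^{2/3}). Then there exist constants k > 0 and X_0 such that for all X ≥ X_0, ∑_{N(p) ≤ Y} Ψ(X/N(p), N(p)) = O(X·exp(−k·(log X)^{1/3})), where the sum runs over nonzero prime ideals p of O_K with N(p) ≤ Y. -/
open NumberField Ideal Filter
open scoped Classical

variable (K : Type) [Field K] [NumberField K]

/-- `M(I)`: the maximal norm of a prime divisor of `I` (with `M(O_K) = 1`). -/
noncomputable def maxNorm (I : Ideal (𝓞 K)) : ℕ :=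
  if I = ⊤ then 1
  else sSup ((fun p => Ideal.absNorm p) '' {p : Ideal (𝓞 K) | p.IsPrime ∧ p ∣ I})

/-- `Ψ(X, Y)`: the number of nonzero ideals of `O_K` of norm at most `X` all of whose
prime divisors have norm at most `Y` (the `Y`-smooth ideals of norm at most `X`). -/
noncomputable def Psi (X Y : ℝ) : ℕ :=
  Nat.card {I : Ideal (𝓞 K) // I ≠ 0 ∧ (Ideal.absNorm I : ℝ) ≤ X ∧ (maxNorm K I : ℝ) ≤ Y}

open UniqueFactorizationMonoid

lemma finPrimes (Y : ℝ) :
    {q : Ideal (𝓞 K) | q.IsPrime ∧ q ≠ ⊥ ∧ (Ideal.absNorm q : ℝ) ≤ Y}.Finite := by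
  refine (Ideal.finite_setOf_absNorm_le ⌊Y⌋₊).subset ?_
  rintro q ⟨-, -, hq⟩
  exact Nat.le_floor hq

noncomputable def PFin (Y : ℝ) : Finset (Ideal (𝓞 K)) := (finPrimes K Y).toFinset

lemma mem_PFin {Y : ℝ} {q : Ideal (𝓞 K)} :
    q ∈ PFin K Y ↔ q.IsPrime ∧ q ≠ ⊥ ∧ (Ideal.absNorm q : ℝ) ≤ Y := by
  simp [PFin, Set.Finite.mem_toFinset]

lemma finSmooth (Z Y : ℝ) :
    {I : Ideal (𝓞 K) | I ≠ 0 ∧ (Ideal.absNorm I : ℝ) ≤ Z ∧ (maxNorm K I : ℝ) ≤ Y}.Finite := by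
  refine (Ideal.finite_setOf_absNorm_le ⌊Z⌋₊).subset ?_
  rintro I ⟨-, hI, -⟩
  exact Nat.le_floor hI

lemma two_le_absNorm {q : Ideal (𝓞 K)} (hq : q.IsPrime) (hq0 : q ≠ ⊥) :
    2 ≤ Ideal.absNorm q := by
  have h0 : Ideal.absNorm q ≠ 0 := by
    simpa [Ideal.absNorm_eq_zero_iff] using hq0
  have h1 : Ideal.absNorm q ≠ 1 := by
    simpa [Ideal.absNorm_eq_one_iff] using hq.ne_top
  omega

lemma absNorm_le_maxNorm {q I : Ideal (𝓞 K)} (hq : q.IsPrime) (hdvd : q ∣ I) (hI : I ≠ 0) :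
    Ideal.absNorm q ≤ maxNorm K I := by
  have hIT : I ≠ ⊤ := by
    rintro rfl
    exact hq.ne_top (Ideal.isUnit_iff.mp (isUnit_of_dvd_one (by rwa [Ideal.one_eq_top])))
  have hNI : 0 < Ideal.absNorm I := by
    rw [Nat.pos_iff_ne_zero, Ne, Ideal.absNorm_eq_zero_iff]
    simpa using hI
  rw [maxNorm, if_neg hIT]
  have hfin : ((fun p => Ideal.absNorm p) '' {p : Ideal (𝓞 K) | p.IsPrime ∧ p ∣ I}).Finite := by
    refine Set.Finite.image _ ((Ideal.finite_setOf_absNorm_le (Ideal.absNorm I)).subset ?_)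
    rintro p ⟨-, hpI⟩
    exact Nat.le_of_dvd hNI (map_dvd Ideal.absNorm hpI)
  exact le_csSup hfin.bddAbove ⟨q, ⟨hq, hdvd⟩, rfl⟩

lemma smooth_factorization {Y : ℝ} {I : Ideal (𝓞 K)} (hI : I ≠ 0) (hsm : (maxNorm K I : ℝ) ≤ Y) :
    I = ∏ q ∈ PFin K Y, q ^ (normalizedFactors I).count q := by
  have hIe : (normalizedFactors I).prod = I := by
    simpa [associated_iff_eq] using prod_normalizedFactors hI
  rw [← Finset.prod_multiset_count_of_subset (normalizedFactors I) (PFin K Y) ?_, hIe]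
  intro q hq'
  have hmem := Multiset.mem_toFinset.mp hq'
  have hqp : Prime q := prime_of_normalized_factor q hmem
  have hdvd : q ∣ I := dvd_of_mem_normalizedFactors hmem
  refine (mem_PFin K).mpr ⟨Ideal.isPrime_of_prime hqp, ?_, ?_⟩
  · simpa [Ideal.zero_eq_bot] using hqp.ne_zero
  · exact le_trans (Nat.cast_le.mpr (absNorm_le_maxNorm K (Ideal.isPrime_of_prime hqp) hdvd hI)) hsm

lemma norm_factorization {Y : ℝ} {I : Ideal (𝓞 K)} (hI : I ≠ 0) (hsm : (maxNorm K I : ℝ) ≤ Y) :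
    Ideal.absNorm I = ∏ q ∈ PFin K Y, (Ideal.absNorm q) ^ (normalizedFactors I).count q := by
  conv_lhs => rw [smooth_factorization K hI hsm]
  rw [map_prod]
  simp [map_pow]

lemma count_le_floor {Z Y : ℝ} {I q : Ideal (𝓞 K)} (hI : I ≠ 0)
    (hNI : (Ideal.absNorm I : ℝ) ≤ Z) (hsm : (maxNorm K I : ℝ) ≤ Y) (hq : q ∈ PFin K Y) :
    (normalizedFactors I).count q ≤ ⌊Z⌋₊ := by
  set e := (normalizedFactors I).count q with he
  obtain ⟨hqp, hq0, -⟩ := (mem_PFin K).mp hq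
  have h2 : 2 ≤ Ideal.absNorm q := two_le_absNorm K hqp hq0
  have hdvd : (Ideal.absNorm q) ^ e ∣ Ideal.absNorm I := by
    have : q ^ e ∣ I := by
      conv_rhs => rw [smooth_factorization K hI hsm]
      exact Finset.dvd_prod_of_mem _ hq
    simpa [map_pow] using map_dvd Ideal.absNorm this
  have hNIpos : 0 < Ideal.absNorm I := by
    rw [Nat.pos_iff_ne_zero, Ne, Ideal.absNorm_eq_zero_iff]; simpa using hI
  have h1 : 2 ^ e ≤ Ideal.absNorm I :=
    le_trans (Nat.pow_le_pow_left h2 e) (Nat.le_of_dvd hNIpos hdvd)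
  have h3 : e < 2 ^ e := Nat.lt_two_pow_self
  have h4 : Ideal.absNorm I ≤ ⌊Z⌋₊ := Nat.le_floor hNI
  omega

lemma geom_tail {r : ℝ} (h0 : 0 ≤ r) (h1 : r < 1) (m : ℕ) :
    ∑ j ∈ Finset.range m, r ^ j ≤ (1 - r)⁻¹ := by
  have h2 : 0 < 1 - r := by linarith
  rw [geom_sum_eq h1.ne m, ← neg_div_neg_eq]
  rw [neg_sub, neg_sub, div_le_iff₀ h2, inv_mul_cancel₀ h2.ne']
  have := pow_nonneg h0 m
  linarith

set_option maxHeartbeats 1000000 in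
lemma rankin_sum (Z Y : ℝ) {σ : ℝ} (hσ : 0 < σ) :
    ∑ I ∈ (finSmooth K Z Y).toFinset, (Ideal.absNorm I : ℝ) ^ (-σ) ≤
      ∏ q ∈ PFin K Y, (1 - (Ideal.absNorm q : ℝ) ^ (-σ))⁻¹ := by
  classical
  set P := PFin K Y with hP
  set T := (finSmooth K Z Y).toFinset with hT
  set r : Ideal (𝓞 K) → ℝ := fun q => (Ideal.absNorm q : ℝ) ^ (-σ) with hr
  have hmemT : ∀ I ∈ T, I ≠ 0 ∧ (Ideal.absNorm I : ℝ) ≤ Z ∧ (maxNorm K I : ℝ) ≤ Y := by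
    intro I hI; rwa [hT, Set.Finite.mem_toFinset] at hI
  have hrq : ∀ q ∈ P, 0 ≤ r q ∧ r q < 1 := by
    intro q hq
    obtain ⟨hqp, hq0, -⟩ := (mem_PFin K).mp hq
    have h2 : (2:ℝ) ≤ (Ideal.absNorm q : ℝ) := by exact_mod_cast two_le_absNorm K hqp hq0
    constructor
    · exact Real.rpow_nonneg (by positivity) _
    · exact Real.rpow_lt_one_of_one_lt_of_neg (by linarith) (by linarith)
  set E := ⌊Z⌋₊ with hE
  -- step 1 : rewrite each summand as a product over P
  have hstep1 : ∀ I ∈ T,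
      (Ideal.absNorm I : ℝ) ^ (-σ) =
        ∏ x : ↥P, (r x.1) ^ ((normalizedFactors I).count x.1) := by
    intro I hI
    obtain ⟨hI0, hIZ, hIsm⟩ := hmemT I hI
    have hfac := norm_factorization K hI0 hIsm (Y := Y)
    rw [Finset.prod_coe_sort P (fun q => (r q) ^ ((normalizedFactors I).count q))]
    have : ((Ideal.absNorm I : ℕ) : ℝ) =
        ∏ q ∈ P, ((Ideal.absNorm q : ℝ)) ^ ((normalizedFactors I).count q) := by
      rw [hfac]; push_cast; rfl
    rw [this, ← Real.finset_prod_rpow P _ (fun q _ => by positivity) (-σ)]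
    refine Finset.prod_congr rfl fun q hq => ?_
    rw [hr, ← Real.rpow_natCast ((Ideal.absNorm q : ℝ)) _, ← Real.rpow_mul (by positivity),
      ← Real.rpow_natCast ((Ideal.absNorm q : ℝ) ^ (-σ)) _, ← Real.rpow_mul (by positivity),
      mul_comm]
  -- step 2 : compare with the sum over all exponent vectors
  set g : Ideal (𝓞 K) → (↥P → ℕ) := fun I x => (normalizedFactors I).count x.1 with hg
  have hginj : ∀ I ∈ T, ∀ J ∈ T, g I = g J → I = J := by
    intro I hI J hJ hIJ
    obtain ⟨hI0, hIZ, hIsm⟩ := hmemT I hI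
    obtain ⟨hJ0, hJZ, hJsm⟩ := hmemT J hJ
    rw [smooth_factorization K hI0 hIsm (Y := Y), smooth_factorization K hJ0 hJsm (Y := Y)]
    refine Finset.prod_congr rfl fun q hq => ?_
    have := congrFun hIJ ⟨q, hq⟩
    simp only [hg] at this
    rw [this]
  have hmapsto : ∀ I ∈ T, g I ∈ Fintype.piFinset (fun _ : ↥P => Finset.range (E + 1)) := by
    intro I hI
    obtain ⟨hI0, hIZ, hIsm⟩ := hmemT I hI
    rw [Fintype.mem_piFinset]
    intro x
    rw [Finset.mem_range]
    exact Nat.lt_succ_of_le (count_le_floor K hI0 hIZ hIsm x.2)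
  have hstep2 :
      ∑ I ∈ T, ∏ x : ↥P, (r x.1) ^ ((normalizedFactors I).count x.1) ≤
        ∑ y ∈ Fintype.piFinset (fun _ : ↥P => Finset.range (E + 1)),
          ∏ x : ↥P, (r x.1) ^ (y x) := by
    have himg : ∑ y ∈ T.image g, (∏ x : ↥P, (r x.1) ^ (y x)) =
        ∑ I ∈ T, ∏ x : ↥P, (r x.1) ^ (g I x) :=
      Finset.sum_image (f := fun y => ∏ x : ↥P, (r x.1) ^ (y x)) (g := g) hginj
    have hle : ∑ y ∈ T.image g, (∏ x : ↥P, (r x.1) ^ (y x)) ≤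
        ∑ y ∈ Fintype.piFinset (fun _ : ↥P => Finset.range (E + 1)),
          ∏ x : ↥P, (r x.1) ^ (y x) := by
      refine Finset.sum_le_sum_of_subset_of_nonneg ?_ ?_
      · intro y hy
        obtain ⟨I, hI, rfl⟩ := Finset.mem_image.mp hy
        exact hmapsto I hI
      · intro y _ _
        exact Finset.prod_nonneg fun x _ => pow_nonneg (hrq x.1 x.2).1 _
    exact le_trans (le_of_eq himg.symm) hle
  -- step 3 : product of geometric sums
  have hstep3 :
      ∑ y ∈ Fintype.piFinset (fun _ : ↥P => Finset.range (E + 1)),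
          ∏ x : ↥P, (r x.1) ^ (y x) =
        ∏ x : ↥P, ∑ j ∈ Finset.range (E + 1), (r x.1) ^ j :=
    (Finset.prod_univ_sum (fun _ : ↥P => Finset.range (E + 1)) (fun x j => (r x.1) ^ j)).symm
  calc ∑ I ∈ T, (Ideal.absNorm I : ℝ) ^ (-σ)
      = ∑ I ∈ T, ∏ x : ↥P, (r x.1) ^ ((normalizedFactors I).count x.1) :=
        Finset.sum_congr rfl hstep1
    _ ≤ ∑ y ∈ Fintype.piFinset (fun _ : ↥P => Finset.range (E + 1)),
          ∏ x : ↥P, (r x.1) ^ (y x) := hstep2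
    _ = ∏ x : ↥P, ∑ j ∈ Finset.range (E + 1), (r x.1) ^ j := hstep3
    _ = ∏ q ∈ P, ∑ j ∈ Finset.range (E + 1), (r q) ^ j :=
        Finset.prod_coe_sort P (fun q => ∑ j ∈ Finset.range (E + 1), (r q) ^ j)
    _ ≤ ∏ q ∈ P, (1 - r q)⁻¹ := by
        refine Finset.prod_le_prod (fun q hq => ?_) (fun q hq => ?_)
        · exact Finset.sum_nonneg fun j _ => pow_nonneg (hrq q hq).1 _
        · exact geom_tail (hrq q hq).1 (hrq q hq).2 _

lemma psi_eq_card (Z Y : ℝ) : Psi K Z Y = (finSmooth K Z Y).toFinset.card := by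
  have h : Psi K Z Y = Nat.card
      ↥{I : Ideal (𝓞 K) | I ≠ 0 ∧ (Ideal.absNorm I : ℝ) ≤ Z ∧ (maxNorm K I : ℝ) ≤ Y} := rfl
  rw [h, Nat.card_coe_set_eq, Set.ncard_eq_toFinset_card _ (finSmooth K Z Y)]

lemma psi_mono {Z Y Y' : ℝ} (h : Y ≤ Y') : Psi K Z Y ≤ Psi K Z Y' := by
  rw [Psi, Psi]
  exact Nat.card_mono ((finSmooth K Z Y').subset (fun I hI => hI))
    (fun I hI => ⟨hI.1, hI.2.1, hI.2.2.trans h⟩)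

lemma one_le_absNorm {I : Ideal (𝓞 K)} (hI : I ≠ 0) : 1 ≤ Ideal.absNorm I := by
  rw [Nat.one_le_iff_ne_zero, Ne, Ideal.absNorm_eq_zero_iff]
  simpa using hI

lemma psi_le_rankin (Z Y : ℝ) (hZ : 0 ≤ Z) {σ : ℝ} (hσ : 0 < σ) :
    (Psi K Z Y : ℝ) ≤ Z ^ σ * ∏ q ∈ PFin K Y, (1 - (Ideal.absNorm q : ℝ) ^ (-σ))⁻¹ := by
  rw [psi_eq_card]
  set T := (finSmooth K Z Y).toFinset with hT
  have hmemT : ∀ I ∈ T, I ≠ 0 ∧ (Ideal.absNorm I : ℝ) ≤ Z ∧ (maxNorm K I : ℝ) ≤ Y := by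
    intro I hI; rwa [hT, Set.Finite.mem_toFinset] at hI
  have h1 : (T.card : ℝ) = ∑ I ∈ T, (1:ℝ) := by simp
  rw [h1]
  have h2 : ∑ I ∈ T, (1:ℝ) ≤ ∑ I ∈ T, Z ^ σ * (Ideal.absNorm I : ℝ) ^ (-σ) := by
    refine Finset.sum_le_sum fun I hI => ?_
    obtain ⟨hI0, hIZ, -⟩ := hmemT I hI
    have hN1 : (1:ℝ) ≤ (Ideal.absNorm I : ℝ) := by exact_mod_cast one_le_absNorm K hI0
    have hNpos : (0:ℝ) < (Ideal.absNorm I : ℝ) := by linarith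
    have hdiv : (1:ℝ) ≤ Z / (Ideal.absNorm I : ℝ) := (one_le_div hNpos).mpr hIZ
    have : (1:ℝ) = (1:ℝ) ^ σ := (Real.one_rpow σ).symm
    rw [this]
    calc (1:ℝ) ^ σ ≤ (Z / (Ideal.absNorm I : ℝ)) ^ σ :=
          Real.rpow_le_rpow (by norm_num) hdiv hσ.le
      _ = Z ^ σ * (Ideal.absNorm I : ℝ) ^ (-σ) := by
          rw [Real.div_rpow hZ hNpos.le, Real.rpow_neg hNpos.le, div_eq_mul_inv]
  refine h2.trans ?_
  rw [← Finset.mul_sum]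
  exact mul_le_mul_of_nonneg_left (rankin_sum K Z Y hσ) (Real.rpow_nonneg hZ σ)

/-- Every nonzero prime ideal contains a unique rational prime, which divides its norm. -/
lemma exists_rat_prime {q : Ideal (𝓞 K)} (hq : q.IsPrime) (hq0 : q ≠ ⊥) :
    ∃ p : ℕ, p.Prime ∧ ((p : ℕ) : 𝓞 K) ∈ q ∧ p ∣ Ideal.absNorm q := by
  classical
  set J := Ideal.comap (algebraMap ℤ (𝓞 K)) q with hJ
  haveI : J.IsPrime := Ideal.IsPrime.comap _
  have hmem : ((Ideal.absNorm q : ℕ) : ℤ) ∈ J := by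
    rw [hJ, Ideal.mem_comap, map_natCast]
    exact Ideal.absNorm_mem q
  have hN0 : Ideal.absNorm q ≠ 0 := by
    intro h; exact hq0 (Ideal.absNorm_eq_zero_iff.mp h)
  have hJbot : J ≠ ⊥ := by
    intro h
    rw [h, Ideal.mem_bot] at hmem
    exact_mod_cast hN0 (by exact_mod_cast hmem)
  haveI : J.IsPrincipal := IsPrincipalIdealRing.principal J
  have hgen : Prime (Submodule.IsPrincipal.generator J) :=
    Submodule.IsPrincipal.prime_generator_of_isPrime J hJbot
  set g := Submodule.IsPrincipal.generator J with hg
  refine ⟨g.natAbs, Int.prime_iff_natAbs_prime.mp hgen, ?_, ?_⟩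
  · have hgJ : g ∈ J := Submodule.IsPrincipal.generator_mem J
    have hthis : algebraMap ℤ (𝓞 K) g ∈ q := Ideal.mem_comap.mp hgJ
    have hmain : algebraMap ℤ (𝓞 K) ((g.natAbs : ℤ)) ∈ q := by
      rcases Int.natAbs_eq g with h | h
      · rw [← h]; exact hthis
      · rw [show ((g.natAbs : ℤ)) = -g from by conv_rhs => rw [h, neg_neg], map_neg]
        exact q.neg_mem hthis
    rw [← map_natCast (algebraMap ℤ (𝓞 K)) g.natAbs]
    exact_mod_cast hmain
  · have : g ∣ ((Ideal.absNorm q : ℕ) : ℤ) :=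
      (Submodule.IsPrincipal.mem_iff_generator_dvd J).mp hmem
    have := Int.natAbs_dvd_natAbs.mpr this
    simpa using this

/-- The rank of the ring of integers. -/
noncomputable def nK : ℕ := Fintype.card (Module.Free.ChooseBasisIndex ℤ (𝓞 K))

lemma absNorm_span_natCast (p : ℕ) :
    Ideal.absNorm (Ideal.span {((p : ℕ) : 𝓞 K)}) = p ^ nK K := by
  rw [Ideal.absNorm_span_singleton, ← map_natCast (algebraMap ℤ (𝓞 K)) p,
    Algebra.norm_algebraMap_of_basis (RingOfIntegers.basis K)]
  rw [nK]
  simp [Int.natAbs_pow]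

lemma norm_dvd_pow_of_mem {q : Ideal (𝓞 K)} (hq : q.IsPrime) (hq0 : q ≠ ⊥) {p : ℕ}
    (hmem : ((p : ℕ) : 𝓞 K) ∈ q) : Ideal.absNorm q ∣ p ^ nK K := by
  have hdvd : q ∣ Ideal.span {((p : ℕ) : 𝓞 K)} :=
    (Ideal.dvd_iff_le).mpr ((Ideal.span_singleton_le_iff_mem _).mpr hmem)
  have := map_dvd Ideal.absNorm hdvd
  rwa [absNorm_span_natCast] at this

lemma minFac_mem {q : Ideal (𝓞 K)} (hq : q.IsPrime) (hq0 : q ≠ ⊥) :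
    (((Ideal.absNorm q).minFac : ℕ) : 𝓞 K) ∈ q := by
  obtain ⟨p, hp, hpq, hpdvd⟩ := exists_rat_prime K hq hq0
  have h2 : 2 ≤ Ideal.absNorm q := two_le_absNorm K hq hq0
  have hmf : (Ideal.absNorm q).minFac ∣ p ^ nK K :=
    dvd_trans (Nat.minFac_dvd _) (norm_dvd_pow_of_mem K hq hq0 hpq)
  have hmfp : (Ideal.absNorm q).minFac.Prime := Nat.minFac_prime (by omega)
  have : (Ideal.absNorm q).minFac = p :=
    (Nat.prime_dvd_prime_iff_eq hmfp hp).mp (hmfp.dvd_of_dvd_pow hmf)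
  rw [this]; exact hpq

lemma fiber_card_le (Y : ℝ) (p : ℕ) (hp : p.Prime) :
    ((PFin K Y).filter (fun q => ((p : ℕ) : 𝓞 K) ∈ q)).card ≤ nK K := by
  classical
  set s := (PFin K Y).filter (fun q => ((p : ℕ) : 𝓞 K) ∈ q) with hs
  have hsq : ∀ q ∈ s, (q.IsPrime ∧ q ≠ ⊥) ∧ ((p : ℕ) : 𝓞 K) ∈ q := by
    intro q hq
    obtain ⟨hqP, hpq⟩ := Finset.mem_filter.mp hq
    obtain ⟨h1, h2, -⟩ := (mem_PFin K).mp hqP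
    exact ⟨⟨h1, h2⟩, hpq⟩
  have hprod : (∏ q ∈ s, q) ∣ Ideal.span {((p : ℕ) : 𝓞 K)} := by
    refine Finset.prod_primes_dvd _ (fun q hq => ?_) (fun q hq => ?_)
    · exact Ideal.prime_of_isPrime (hsq q hq).1.2 (hsq q hq).1.1
    · exact (Ideal.dvd_iff_le).mpr ((Ideal.span_singleton_le_iff_mem _).mpr (hsq q hq).2)
  have hnormdvd : (∏ q ∈ s, Ideal.absNorm q) ∣ p ^ nK K := by
    rw [← map_prod, ← absNorm_span_natCast K p]
    exact map_dvd _ hprod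
  have hge : ∀ q ∈ s, p ≤ Ideal.absNorm q := by
    intro q hq
    obtain ⟨j, hj, hNq⟩ := (Nat.dvd_prime_pow hp).mp
      (norm_dvd_pow_of_mem K (hsq q hq).1.1 (hsq q hq).1.2 (hsq q hq).2)
    have h2 : 2 ≤ Ideal.absNorm q := two_le_absNorm K (hsq q hq).1.1 (hsq q hq).1.2
    have hj0 : j ≠ 0 := by rintro rfl; rw [pow_zero] at hNq; omega
    calc p = p ^ 1 := (pow_one p).symm
      _ ≤ p ^ j := Nat.pow_le_pow_right hp.pos (by omega)
      _ = Ideal.absNorm q := hNq.symm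
  have hcard : p ^ s.card ≤ ∏ q ∈ s, Ideal.absNorm q := by
    rw [← Finset.prod_const]
    exact Finset.prod_le_prod' hge
  have hle : (∏ q ∈ s, Ideal.absNorm q) ≤ p ^ nK K :=
    Nat.le_of_dvd (Nat.pow_pos hp.pos) hnormdvd
  exact (Nat.pow_le_pow_iff_right hp.one_lt).mp (hcard.trans hle)

lemma S1_le (Y : ℝ) :
    ∑ q ∈ PFin K Y, ((Ideal.absNorm q : ℝ))⁻¹ ≤
      (nK K) * ∑ p ∈ Nat.primesBelow (⌊Y⌋₊ + 1), ((p : ℝ))⁻¹ := by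
  classical
  have hmaps : ∀ q ∈ PFin K Y, (Ideal.absNorm q).minFac ∈ Nat.primesBelow (⌊Y⌋₊ + 1) := by
    intro q hq
    obtain ⟨h1, h2, h3⟩ := (mem_PFin K).mp hq
    have h4 : 2 ≤ Ideal.absNorm q := two_le_absNorm K h1 h2
    rw [Nat.mem_primesBelow]
    refine ⟨?_, Nat.minFac_prime (by omega)⟩
    have : (Ideal.absNorm q).minFac ≤ Ideal.absNorm q := Nat.minFac_le (by omega)
    have h5 : Ideal.absNorm q ≤ ⌊Y⌋₊ := Nat.le_floor h3
    omega
  rw [← Finset.sum_fiberwise_of_maps_to hmaps (fun q => ((Ideal.absNorm q : ℝ))⁻¹)]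
  rw [Finset.mul_sum]
  refine Finset.sum_le_sum fun p hp => ?_
  have hpp : p.Prime := (Nat.mem_primesBelow.mp hp).2
  calc ∑ q ∈ (PFin K Y).filter (fun q => (Ideal.absNorm q).minFac = p),
        ((Ideal.absNorm q : ℝ))⁻¹
      ≤ ∑ q ∈ (PFin K Y).filter (fun q => (Ideal.absNorm q).minFac = p), ((p : ℝ))⁻¹ := by
        refine Finset.sum_le_sum fun q hq => ?_
        obtain ⟨hqP, hqf⟩ := Finset.mem_filter.mp hq
        obtain ⟨h1, h2, -⟩ := (mem_PFin K).mp hqP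
        have h4 : 2 ≤ Ideal.absNorm q := two_le_absNorm K h1 h2
        have : p ≤ Ideal.absNorm q := by
          rw [← hqf]; exact Nat.minFac_le (by omega)
        have hple : (p:ℝ) ≤ (Ideal.absNorm q : ℝ) := by exact_mod_cast this
        exact inv_anti₀ (by exact_mod_cast hpp.pos) hple
    _ = ((PFin K Y).filter (fun q => (Ideal.absNorm q).minFac = p)).card * ((p : ℝ))⁻¹ := by
        rw [Finset.sum_const, nsmul_eq_mul]
    _ ≤ (nK K) * ((p : ℝ))⁻¹ := by
        refine mul_le_mul_of_nonneg_right ?_ (by positivity)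
        have hsub : (PFin K Y).filter (fun q => (Ideal.absNorm q).minFac = p) ⊆
            (PFin K Y).filter (fun q => ((p : ℕ) : 𝓞 K) ∈ q) := by
          intro q hq
          obtain ⟨hqP, hqf⟩ := Finset.mem_filter.mp hq
          obtain ⟨h1, h2, -⟩ := (mem_PFin K).mp hqP
          refine Finset.mem_filter.mpr ⟨hqP, ?_⟩
          rw [← hqf]
          exact minFac_mem K h1 h2
        have := Finset.card_le_card hsub
        have h6 := fiber_card_le K Y p hpp
        exact_mod_cast le_trans (Nat.cast_le.mpr this) (Nat.cast_le.mpr h6)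

lemma theta_le (t : ℕ) : ∑ p ∈ Nat.primesBelow t, Real.log p ≤ t * Real.log 4 := by
  have hsub : Nat.primesBelow t ⊆ (Finset.range (t + 1)).filter Nat.Prime := by
    intro p hp
    rw [Nat.mem_primesBelow] at hp
    exact Finset.mem_filter.mpr ⟨Finset.mem_range.mpr (by omega), hp.2⟩
  have h1 : ∑ p ∈ Nat.primesBelow t, Real.log p ≤
      ∑ p ∈ (Finset.range (t + 1)).filter Nat.Prime, Real.log p := by
    refine Finset.sum_le_sum_of_subset_of_nonneg hsub fun p hp _ => ?_
    have := (Finset.mem_filter.mp hp).2.two_le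
    exact Real.log_nonneg (by exact_mod_cast Nat.one_le_of_lt this)
  have h2 : ∑ p ∈ (Finset.range (t + 1)).filter Nat.Prime, Real.log p =
      Real.log (primorial t) := by
    rw [primorial, Nat.cast_prod, Real.log_prod]
    intro p hp
    have := (Finset.mem_filter.mp hp).2.pos
    positivity
  have h3 : Real.log (primorial t) ≤ Real.log ((4:ℝ) ^ t) := by
    refine Real.log_le_log (by exact_mod_cast primorial_pos t) ?_
    exact_mod_cast primorial_le_4_pow t
  rw [Real.log_pow] at h3
  linarith [h1, h2.le, h3]

lemma harmonic_bound (J : ℕ) : ∑ j ∈ Finset.Icc 1 J, ((j:ℝ))⁻¹ ≤ 1 + Real.log J := by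
  have hcast : ((harmonic J : ℚ) : ℝ) = ∑ j ∈ Finset.Icc 1 J, ((j:ℝ))⁻¹ := by
    rw [harmonic_eq_sum_Icc]; push_cast; rfl
  have := harmonic_le_one_add_log J
  rw [hcast] at this
  exact this

lemma mertens_sum (m : ℕ) :
    ∑ p ∈ Nat.primesBelow m, ((p:ℝ))⁻¹ ≤ 4 * (1 + Real.log (Nat.log 2 m)) := by
  classical
  set J := Nat.log 2 m with hJ
  have hmaps : ∀ p ∈ Nat.primesBelow m, Nat.log 2 p ∈ Finset.Icc 1 J := by
    intro p hp
    rw [Nat.mem_primesBelow] at hp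
    refine Finset.mem_Icc.mpr ⟨?_, Nat.log_mono_right (le_of_lt hp.1)⟩
    exact Nat.log_pos (by norm_num) hp.2.two_le
  rw [← Finset.sum_fiberwise_of_maps_to hmaps (fun p => ((p:ℝ))⁻¹)]
  have hblock : ∀ j ∈ Finset.Icc 1 J,
      ∑ p ∈ (Nat.primesBelow m).filter (fun p => Nat.log 2 p = j), ((p:ℝ))⁻¹ ≤ 4 / j := by
    intro j hj
    obtain ⟨hj1, hjJ⟩ := Finset.mem_Icc.mp hj
    have hlog2pos : (0:ℝ) < Real.log 2 := Real.log_pos (by norm_num)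
    have hjpos : (0:ℝ) < j := by exact_mod_cast hj1
    set C : ℝ := j * Real.log 2 * 2 ^ j with hC
    have hCpos : 0 < C := by positivity
    have hfib : ∀ p ∈ (Nat.primesBelow m).filter (fun p => Nat.log 2 p = j),
        ((p:ℝ))⁻¹ ≤ Real.log p / C := by
      intro p hp
      obtain ⟨hpm, hpj⟩ := Finset.mem_filter.mp hp
      have hpp : p.Prime := (Nat.mem_primesBelow.mp hpm).2
      have hp2j : 2 ^ j ≤ p := by
        rw [← hpj]; exact Nat.pow_log_le_self 2 hpp.pos.ne'
      have hppos : (0:ℝ) < p := by exact_mod_cast hpp.pos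
      have h2jR : (2:ℝ) ^ j ≤ p := by exact_mod_cast hp2j
      have hlogp : (j:ℝ) * Real.log 2 ≤ Real.log p := by
        rw [← Real.log_pow]
        exact Real.log_le_log (by positivity) h2jR
      rw [inv_eq_one_div, div_le_div_iff₀ hppos hCpos, hC, one_mul]
      calc j * Real.log 2 * 2 ^ j ≤ Real.log p * 2 ^ j :=
            mul_le_mul_of_nonneg_right hlogp (by positivity)
        _ ≤ Real.log p * p := by
            refine mul_le_mul_of_nonneg_left h2jR ?_
            exact Real.log_nonneg (by exact_mod_cast hpp.one_lt.le)
    calc ∑ p ∈ (Nat.primesBelow m).filter (fun p => Nat.log 2 p = j), ((p:ℝ))⁻¹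
        ≤ ∑ p ∈ (Nat.primesBelow m).filter (fun p => Nat.log 2 p = j), Real.log p / C :=
          Finset.sum_le_sum hfib
      _ = (∑ p ∈ (Nat.primesBelow m).filter (fun p => Nat.log 2 p = j), Real.log p) / C := by
          rw [Finset.sum_div]
      _ ≤ (∑ p ∈ Nat.primesBelow (2 ^ (j+1)), Real.log p) / C := by
          refine (div_le_div_iff_of_pos_right hCpos).mpr ?_
          refine Finset.sum_le_sum_of_subset_of_nonneg ?_ (fun p hp _ => ?_)
          · intro p hp
            obtain ⟨hpm, hpj⟩ := Finset.mem_filter.mp hp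
            have hpp : p.Prime := (Nat.mem_primesBelow.mp hpm).2
            rw [Nat.mem_primesBelow]
            refine ⟨?_, hpp⟩
            rw [← hpj]
            exact Nat.lt_pow_succ_log_self (by norm_num) p
          · have hpp : p.Prime := (Nat.mem_primesBelow.mp hp).2
            exact Real.log_nonneg (by exact_mod_cast hpp.one_lt.le)
      _ ≤ ((2:ℝ) ^ (j+1) * Real.log 4) / C := by
          refine (div_le_div_iff_of_pos_right hCpos).mpr ?_
          exact_mod_cast theta_le (2 ^ (j+1))
      _ = 4 / j := by
          rw [hC, show Real.log 4 = 2 * Real.log 2 by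
            rw [show (4:ℝ) = 2 ^ 2 by norm_num, Real.log_pow]; push_cast; ring]
          field_simp
          ring
  calc ∑ j ∈ Finset.Icc 1 J,
        ∑ p ∈ (Nat.primesBelow m).filter (fun p => Nat.log 2 p = j), ((p:ℝ))⁻¹
      ≤ ∑ j ∈ Finset.Icc 1 J, 4 / (j:ℝ) := Finset.sum_le_sum hblock
    _ = 4 * ∑ j ∈ Finset.Icc 1 J, ((j:ℝ))⁻¹ := by
        rw [Finset.mul_sum]; exact Finset.sum_congr rfl fun j _ => by rw [div_eq_mul_inv]
    _ ≤ 4 * (1 + Real.log J) := by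
        have := harmonic_bound J
        linarith

lemma inv_one_sub_le_exp {t : ℝ} (h0 : 0 ≤ t) (h1 : t ≤ 3/4) : (1 - t)⁻¹ ≤ Real.exp (4*t) := by
  have h2 : 0 < 1 - t := by linarith
  have h3 : (1 - t)⁻¹ ≤ 1 + 4*t := by
    rw [inv_eq_one_div, div_le_iff₀ h2]
    nlinarith
  have h4 := Real.add_one_le_exp (4*t)
  linarith

lemma rpow_neghalf_le : (2:ℝ) ^ (-(1/2):ℝ) ≤ 3/4 := by
  have hx0 : (0:ℝ) ≤ (2:ℝ) ^ (-(1/2):ℝ) := Real.rpow_nonneg (by norm_num) _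
  have hx2 : ((2:ℝ) ^ (-(1/2):ℝ)) ^ (2:ℕ) = (1:ℝ)/2 := by
    rw [← Real.rpow_natCast ((2:ℝ) ^ (-(1/2):ℝ)) 2, ← Real.rpow_mul (by norm_num)]
    norm_num
  nlinarith [hx2]

lemma norm_term_le {Y σ : ℝ} (hσl : 1/2 ≤ σ) {q : Ideal (𝓞 K)} (hq : q ∈ PFin K Y) :
    0 ≤ (Ideal.absNorm q : ℝ) ^ (-σ) ∧ (Ideal.absNorm q : ℝ) ^ (-σ) ≤ 3/4 := by
  obtain ⟨h1, h2, -⟩ := (mem_PFin K).mp hq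
  have hN2 : (2:ℝ) ≤ (Ideal.absNorm q : ℝ) := by exact_mod_cast two_le_absNorm K h1 h2
  have hσ0 : 0 ≤ σ := by linarith
  refine ⟨Real.rpow_nonneg (by positivity) _, ?_⟩
  have e1 : (Ideal.absNorm q : ℝ) ^ (-σ) = ((Ideal.absNorm q : ℝ) ^ σ)⁻¹ :=
    Real.rpow_neg (by positivity) σ
  have e2 : (2:ℝ) ^ σ ≤ (Ideal.absNorm q : ℝ) ^ σ :=
    Real.rpow_le_rpow (by norm_num) hN2 hσ0
  have e3 : ((Ideal.absNorm q : ℝ) ^ σ)⁻¹ ≤ ((2:ℝ) ^ σ)⁻¹ :=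
    inv_anti₀ (Real.rpow_pos_of_pos (by norm_num) σ) e2
  have e4 : ((2:ℝ) ^ σ)⁻¹ = (2:ℝ) ^ (-σ) := (Real.rpow_neg (by norm_num) σ).symm
  have e5 : (2:ℝ) ^ (-σ) ≤ (2:ℝ) ^ (-(1/2):ℝ) :=
    Real.rpow_le_rpow_of_exponent_le (by norm_num) (by linarith)
  calc (Ideal.absNorm q : ℝ) ^ (-σ) = ((Ideal.absNorm q : ℝ) ^ σ)⁻¹ := e1
    _ ≤ ((2:ℝ) ^ σ)⁻¹ := e3
    _ = (2:ℝ) ^ (-σ) := e4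
    _ ≤ (2:ℝ) ^ (-(1/2):ℝ) := e5
    _ ≤ 3/4 := rpow_neghalf_le

lemma prod_bound (Y : ℝ) {σ : ℝ} (hσl : 1/2 ≤ σ) :
    ∏ q ∈ PFin K Y, (1 - (Ideal.absNorm q : ℝ) ^ (-σ))⁻¹ ≤
      Real.exp (4 * ∑ q ∈ PFin K Y, (Ideal.absNorm q : ℝ) ^ (-σ)) := by
  rw [Finset.mul_sum, Real.exp_sum]
  refine Finset.prod_le_prod (fun q hq => ?_) (fun q hq => ?_)
  · obtain ⟨hr0, hr1⟩ := norm_term_le K hσl hq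
    exact inv_nonneg.mpr (by linarith)
  · obtain ⟨hr0, hr1⟩ := norm_term_le K hσl hq
    exact inv_one_sub_le_exp hr0 hr1

set_option maxHeartbeats 1600000 in
theorem small_primes_smooth_sum_bound :
    ∃ k > (0:ℝ), ∃ c > (0:ℝ), ∃ X₀ : ℝ, ∀ X ≥ X₀,
      (∑ᶠ p ∈ {p : Ideal (𝓞 K) | p.IsPrime ∧ p ≠ ⊥ ∧
          (Ideal.absNorm p : ℝ) ≤ Real.exp (Real.log X ^ ((2:ℝ)/3))},
        (Psi K (X / (Ideal.absNorm p : ℝ)) (Ideal.absNorm p : ℝ) : ℝ)) ≤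
      c * (X * Real.exp (-k * Real.log X ^ ((1:ℝ)/3))) := by
  classical
  set n : ℝ := (nK K : ℝ) + 1 with hn
  have hcast0 : (0:ℝ) ≤ (nK K : ℝ) := Nat.cast_nonneg _
  have hn1 : (1:ℝ) ≤ n := by linarith only [hcast0, hn]
  set M : ℝ := 13000 * n with hM
  have hM100 : 100 ≤ M := by linarith only [hM, hn1]
  have hM0 : (0:ℝ) ≤ M := by linarith only [hM100]
  have hM1 : (1:ℝ) ≤ M := by linarith only [hM100]
  refine ⟨1/2, by norm_num, 1, by norm_num, Real.exp (M ^ (6:ℕ)), ?_⟩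
  intro X hX
  set L := Real.log X with hL
  have hX0pos : (0:ℝ) < Real.exp (M ^ (6:ℕ)) := Real.exp_pos _
  have hXpos : 0 < X := lt_of_lt_of_le hX0pos hX
  have hLM : M ^ (6:ℕ) ≤ L := by
    rw [hL, ← Real.log_exp (M ^ (6:ℕ))]
    exact Real.log_le_log hX0pos hX
  have hL1 : 1 ≤ L := le_trans (one_le_pow₀ hM1) hLM
  have hLpos : 0 < L := by linarith only [hL1]
  set a := L ^ ((1:ℝ)/3) with ha
  set b := L ^ ((1:ℝ)/6) with hb
  have hapos : 0 < a := Real.rpow_pos_of_pos hLpos _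
  have hbpos : 0 < b := Real.rpow_pos_of_pos hLpos _
  have ha1 : 1 ≤ a := by
    calc (1:ℝ) = (1:ℝ) ^ ((1:ℝ)/3) := (Real.one_rpow _).symm
      _ ≤ L ^ ((1:ℝ)/3) := Real.rpow_le_rpow (by norm_num) hL1 (by norm_num)
  have hb1 : 1 ≤ b := by
    calc (1:ℝ) = (1:ℝ) ^ ((1:ℝ)/6) := (Real.one_rpow _).symm
      _ ≤ L ^ ((1:ℝ)/6) := Real.rpow_le_rpow (by norm_num) hL1 (by norm_num)
  have hab : a = b ^ (2:ℕ) := by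
    rw [ha, hb, ← Real.rpow_natCast (L ^ ((1:ℝ)/6)) 2, ← Real.rpow_mul hLpos.le]
    norm_num
  have hLa : a ^ (3:ℕ) = L := by
    rw [ha, ← Real.rpow_natCast (L ^ ((1:ℝ)/3)) 3, ← Real.rpow_mul hLpos.le]
    norm_num
  have hMb : M ≤ b := by
    have h1 : ((M ^ (6:ℕ) : ℝ)) ^ ((1:ℝ)/6) ≤ b := by
      rw [hb]
      exact Real.rpow_le_rpow (by positivity) hLM (by norm_num)
    have h2 : ((M ^ (6:ℕ) : ℝ)) ^ ((1:ℝ)/6) = M := by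
      rw [← Real.rpow_natCast M 6, ← Real.rpow_mul hM0]
      norm_num
    linarith only [h1, h2]
  have hb2 : (2:ℝ) ≤ b := by linarith only [hMb, hM100]
  have ha4 : (4:ℝ) ≤ a := by
    calc (4:ℝ) = 2 ^ (2:ℕ) := by norm_num
      _ ≤ b ^ (2:ℕ) := pow_le_pow_left₀ (by norm_num) hb2 2
      _ = a := hab.symm
  have ha2one : (1:ℝ) ≤ a ^ (2:ℕ) := one_le_pow₀ ha1
  have ha2two : (2:ℝ) ≤ a ^ (2:ℕ) := by
    have h16 : (4:ℝ) ^ (2:ℕ) ≤ a ^ (2:ℕ) := pow_le_pow_left₀ (by norm_num) ha4 2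
    have : ((4:ℝ)) ^ (2:ℕ) = 16 := by norm_num
    linarith only [h16, this]
  set Ycal := Real.exp (L ^ ((2:ℝ)/3)) with hYcal
  have hA2 : L ^ ((2:ℝ)/3) = a ^ (2:ℕ) := by
    rw [ha, ← Real.rpow_natCast (L ^ ((1:ℝ)/3)) 2, ← Real.rpow_mul hLpos.le]
    norm_num
  have hY1 : 1 ≤ Ycal := by
    rw [hYcal]
    have h0 : (0:ℝ) ≤ L ^ ((2:ℝ)/3) := Real.rpow_nonneg hLpos.le _
    calc (1:ℝ) = Real.exp 0 := Real.exp_zero.symm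
      _ ≤ Real.exp (L ^ ((2:ℝ)/3)) := Real.exp_le_exp.mpr h0
  have hYpos : 0 < Ycal := by linarith only [hY1]
  have hlogY : Real.log Ycal = a ^ (2:ℕ) := by rw [hYcal, Real.log_exp, hA2]
  set δ := (a ^ (2:ℕ))⁻¹ with hδ
  have hδpos : 0 < δ := by positivity
  have hδhalf : δ ≤ 1/2 := by
    rw [hδ, show (1:ℝ)/2 = 2⁻¹ by norm_num]
    exact inv_anti₀ (by norm_num) ha2two
  set σ := 1 - δ with hσ
  have hσpos : 0 < σ := by rw [hσ]; linarith only [hδhalf]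
  have hσhalf : 1/2 ≤ σ := by rw [hσ]; linarith only [hδhalf]
  -- identify the finsum with a Finset sum
  have hseteq : {p : Ideal (𝓞 K) | p.IsPrime ∧ p ≠ ⊥ ∧ (Ideal.absNorm p : ℝ) ≤ Ycal} =
      ↑(PFin K Ycal) := (finPrimes K Ycal).coe_toFinset.symm
  rw [hseteq, finsum_mem_coe_finset]
  set PP : ℝ := ∏ q ∈ PFin K Ycal, (1 - (Ideal.absNorm q : ℝ) ^ (-σ))⁻¹ with hPP
  set S : ℝ := ∑ q ∈ PFin K Ycal, (Ideal.absNorm q : ℝ) ^ (-σ) with hS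
  have hSnn : 0 ≤ S := by
    rw [hS]
    exact Finset.sum_nonneg fun q hq => Real.rpow_nonneg (by positivity) _
  have hterm : ∀ q ∈ PFin K Ycal,
      (Psi K (X / (Ideal.absNorm q : ℝ)) (Ideal.absNorm q : ℝ) : ℝ) ≤
        X ^ σ * (Ideal.absNorm q : ℝ) ^ (-σ) * PP := by
    intro q hq
    obtain ⟨h1, h2, h3⟩ := (mem_PFin K).mp hq
    have hN2 : (2:ℝ) ≤ (Ideal.absNorm q : ℝ) := by exact_mod_cast two_le_absNorm K h1 h2
    have hNpos : (0:ℝ) < (Ideal.absNorm q : ℝ) := by linarith only [hN2]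
    have hmono : (Psi K (X / (Ideal.absNorm q : ℝ)) (Ideal.absNorm q : ℝ) : ℝ) ≤
        (Psi K (X / (Ideal.absNorm q : ℝ)) Ycal : ℝ) := by
      exact_mod_cast psi_mono K h3
    refine hmono.trans ?_
    have hZ : (0:ℝ) ≤ X / (Ideal.absNorm q : ℝ) := by positivity
    refine (psi_le_rankin K _ Ycal hZ hσpos).trans ?_
    rw [← hPP]
    have hdiv : (X / (Ideal.absNorm q : ℝ)) ^ σ = X ^ σ * (Ideal.absNorm q : ℝ) ^ (-σ) := by
      rw [Real.div_rpow hXpos.le hNpos.le, Real.rpow_neg hNpos.le, div_eq_mul_inv]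
    rw [hdiv]
  have hsum : ∑ q ∈ PFin K Ycal,
      (Psi K (X / (Ideal.absNorm q : ℝ)) (Ideal.absNorm q : ℝ) : ℝ) ≤ X ^ σ * PP * S := by
    refine (Finset.sum_le_sum hterm).trans ?_
    rw [hS, Finset.mul_sum]
    refine le_of_eq (Finset.sum_congr rfl fun q hq => ?_)
    ring
  -- bound S
  set m := ⌊Ycal⌋₊ + 1 with hm
  have hm1 : (1:ℝ) ≤ (m:ℝ) := by
    rw [hm]; push_cast
    have h0 : (0:ℝ) ≤ (⌊Ycal⌋₊ : ℝ) := Nat.cast_nonneg _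
    linarith only [h0]
  have hmY : (m:ℝ) ≤ 2 * Ycal := by
    rw [hm]; push_cast
    have h0 := Nat.floor_le hYpos.le
    linarith only [h0, hY1]
  have hNqinv : ∀ q ∈ PFin K Ycal,
      (Ideal.absNorm q : ℝ) ^ (-σ) ≤ Real.exp 1 * ((Ideal.absNorm q : ℝ))⁻¹ := by
    intro q hq
    obtain ⟨h1, h2, h3⟩ := (mem_PFin K).mp hq
    have hN2 : (2:ℝ) ≤ (Ideal.absNorm q : ℝ) := by exact_mod_cast two_le_absNorm K h1 h2
    have hNpos : (0:ℝ) < (Ideal.absNorm q : ℝ) := by linarith only [hN2]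
    have e1 : (Ideal.absNorm q : ℝ) ^ (-σ) =
        (Ideal.absNorm q : ℝ) ^ δ * ((Ideal.absNorm q : ℝ))⁻¹ := by
      rw [show -σ = δ + (-1) by rw [hσ]; ring, Real.rpow_add hNpos, Real.rpow_neg_one]
    have e2 : (Ideal.absNorm q : ℝ) ^ δ ≤ Ycal ^ δ :=
      Real.rpow_le_rpow hNpos.le h3 hδpos.le
    have e3 : Ycal ^ δ = Real.exp 1 := by
      rw [hYcal, ← Real.exp_mul, hA2, hδ, mul_inv_cancel₀ (by positivity)]
    rw [e1]
    refine mul_le_mul_of_nonneg_right ?_ (by positivity)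
    rw [← e3]; exact e2
  have hS1 : S ≤ Real.exp 1 * ∑ q ∈ PFin K Ycal, ((Ideal.absNorm q : ℝ))⁻¹ := by
    rw [hS, Finset.mul_sum]
    exact Finset.sum_le_sum hNqinv
  have hS2 := S1_le K Ycal
  have hS3 := mertens_sum m
  have hlog2l : (1:ℝ)/2 ≤ Real.log 2 := by
    have h0 := Real.log_two_gt_d9; linarith only [h0]
  have hlog2u : Real.log 2 ≤ 1 := by
    have h0 := Real.log_two_lt_d9; linarith only [h0]
  have hNatlog : (Nat.log 2 m : ℝ) ≤ 4 * a ^ (2:ℕ) := by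
    have h1 : ((2:ℝ)) ^ (Nat.log 2 m : ℕ) ≤ (m:ℝ) := by
      exact_mod_cast Nat.pow_log_le_self 2 (by omega)
    have h2 : (Nat.log 2 m : ℝ) * Real.log 2 ≤ Real.log m := by
      rw [← Real.log_pow]
      exact Real.log_le_log (by positivity) h1
    have h3 : Real.log m ≤ Real.log 2 + a ^ (2:ℕ) := by
      have h3a : Real.log m ≤ Real.log (2 * Ycal) :=
        Real.log_le_log (by linarith only [hm1]) hmY
      have h3b : Real.log (2 * Ycal) = Real.log 2 + Real.log Ycal :=
        Real.log_mul (by norm_num) (ne_of_gt hYpos)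
      rw [h3b, hlogY] at h3a
      exact h3a
    have h5 : (Nat.log 2 m : ℝ) * (1/2) ≤ (Nat.log 2 m : ℝ) * Real.log 2 :=
      mul_le_mul_of_nonneg_left hlog2l (Nat.cast_nonneg _)
    linarith only [h5, h2, h3, hlog2u, ha2one]
  have hR : ∑ p ∈ Nat.primesBelow m, ((p:ℝ))⁻¹ ≤ 12 + 8 * Real.log a := by
    refine hS3.trans ?_
    have hlog4a : Real.log (Nat.log 2 m) ≤ Real.log (4 * a ^ (2:ℕ)) := by
      rcases Nat.eq_zero_or_pos (Nat.log 2 m) with h | h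
      · rw [h]
        simp only [Nat.cast_zero, Real.log_zero]
        exact Real.log_nonneg (by linarith only [ha2one])
      · exact Real.log_le_log (by exact_mod_cast h) hNatlog
    have heq : Real.log (4 * a ^ (2:ℕ)) = Real.log 4 + 2 * Real.log a := by
      rw [Real.log_mul (by norm_num) (by positivity), Real.log_pow]
      push_cast; ring
    have hlog4 : Real.log 4 ≤ 2 := by
      rw [show (4:ℝ) = 2^(2:ℕ) by norm_num, Real.log_pow]
      push_cast
      linarith only [hlog2u]
    have hloga : 0 ≤ Real.log a := Real.log_nonneg ha1
    linarith only [hlog4a, heq, hlog4, hloga]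
  have hRnn : 0 ≤ ∑ p ∈ Nat.primesBelow m, ((p:ℝ))⁻¹ :=
    Finset.sum_nonneg fun p _ => by positivity
  have hloga : 0 ≤ Real.log a := Real.log_nonneg ha1
  have he3 : Real.exp 1 ≤ 3 := by
    have h0 := Real.exp_one_lt_d9; linarith only [h0]
  have hnn : (nK K : ℝ) ≤ n := by linarith only [hn]
  have h6 : ∑ q ∈ PFin K Ycal, ((Ideal.absNorm q : ℝ))⁻¹ ≤ n * (12 + 8 * Real.log a) := by
    have h0 := mul_le_mul hnn hR hRnn (by linarith only [hn1] : (0:ℝ) ≤ n)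
    linarith only [hS2, h0]
  have h7 : 0 ≤ ∑ q ∈ PFin K Ycal, ((Ideal.absNorm q : ℝ))⁻¹ :=
    Finset.sum_nonneg fun q _ => by positivity
  have key : Real.exp 1 * ∑ q ∈ PFin K Ycal, ((Ideal.absNorm q : ℝ))⁻¹ ≤
      3 * (n * (12 + 8 * Real.log a)) :=
    mul_le_mul he3 h6 h7 (by norm_num)
  have hS4 : S ≤ 36 * n + 24 * (n * Real.log a) := by
    refine (hS1.trans key).trans_eq (by ring)
  have hPPle : PP ≤ Real.exp (4 * S) := by rw [hPP, hS]; exact prod_bound K Ycal hσhalf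
  have h5S : 5 * S ≤ a / 2 := by
    have hloga' : Real.log a ≤ 2 * b := by
      have h1 : Real.log a = 2 * Real.log b := by rw [hab, Real.log_pow]; push_cast; ring
      have h2 : Real.log b ≤ b - 1 := Real.log_le_sub_one_of_pos hbpos
      linarith only [h1, h2, hbpos]
    have hn0 : (0:ℝ) ≤ n := by linarith only [hn1]
    have hnb : n * Real.log a ≤ n * (2 * b) := mul_le_mul_of_nonneg_left hloga' hn0
    have hnnb : n * 1 ≤ n * b := mul_le_mul_of_nonneg_left hb1 hn0
    have e1 : n * (2 * b) = 2 * (n * b) := by ring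
    have e2 : n * 1 = n := by ring
    have h3 : 5 * S ≤ 420 * (n * b) := by linarith only [hS4, hnb, hnnb, e1, e2]
    have h4 : 840 * n ≤ b := by linarith only [hMb, hM, hn1]
    have keymul : 840 * n * b ≤ b * b := mul_le_mul_of_nonneg_right h4 hbpos.le
    have e3 : 840 * n * b = 2 * (420 * (n * b)) := by ring
    have e4 : b * b = a := by rw [hab]; ring
    linarith only [h3, keymul, e3, e4]
  -- final chain
  have hXσ : X ^ σ = X * Real.exp (-a) := by
    rw [hσ, show (1:ℝ) - δ = 1 + (-δ) by ring, Real.rpow_add hXpos, Real.rpow_one]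
    congr 1
    rw [Real.rpow_def_of_pos hXpos, ← hL]
    congr 1
    have hLδ : L * δ = a := by
      rw [hδ, ← hLa, pow_succ]
      field_simp
    rw [← hLδ]; ring
  have hSexp : S ≤ Real.exp S := by
    have h0 := Real.add_one_le_exp S; linarith only [h0]
  have hfinal : X ^ σ * PP * S ≤ X * Real.exp (-(1/2) * a) := by
    rw [hXσ]
    have hstep : PP * S ≤ Real.exp (4 * S) * Real.exp S :=
      mul_le_mul hPPle hSexp hSnn (Real.exp_pos _).le
    calc X * Real.exp (-a) * PP * S = X * Real.exp (-a) * (PP * S) := by ring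
      _ ≤ X * Real.exp (-a) * (Real.exp (4 * S) * Real.exp S) := by
          refine mul_le_mul_of_nonneg_left hstep (by positivity)
      _ = X * Real.exp (-a + (4 * S + S)) := by
          rw [← Real.exp_add, mul_assoc, ← Real.exp_add]
      _ ≤ X * Real.exp (-(1/2) * a) := by
          refine mul_le_mul_of_nonneg_left (Real.exp_le_exp.mpr (by linarith only [h5S])) hXpos.le
  calc ∑ q ∈ PFin K Ycal,
        (Psi K (X / (Ideal.absNorm q : ℝ)) (Ideal.absNorm q : ℝ) : ℝ)
      ≤ X ^ σ * PP * S := hsum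
    _ ≤ X * Real.exp (-(1/2) * a) := hfinal
    _ = 1 * (X * Real.exp (-(1/2) * a)) := by ring
end

section
/- Let K be a number field of degree d = [K:ℚ]. Then for all X ≥ 4, ∑_{2 ≤ N(I) ≤ X, Q(I) ≥ 2} (Q(I) − 1) ≤ d²·∑_{N(p) ≤ √X} Ψ(X/N(p)², N(p)), where the left sum runs over nonzero ideals I of O_K with 2 ≤ N(I) ≤ X having at least two prime divisors of maximal norm, and the right sum runs over nonzero prime ideals p of O_K with N(p) ≤ √X. -/
open NumberField Ideal Filter
open scoped Classical

variable (K : Type) [Field K] [NumberField K]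

/-- `Q(I)`: the number of prime divisors of `I` of maximal norm. -/
noncomputable def Q (I : Ideal (𝓞 K)) : ℕ :=
  Nat.card {p : Ideal (𝓞 K) // p.IsPrime ∧ p ∣ I ∧ Ideal.absNorm p = maxNorm K I}

section Aux

set_option linter.unusedSectionVars false

variable {K}

lemma nat_card_subtype {α : Type*} (P : α → Prop) (h : {x | P x}.Finite) :
    Nat.card {x // P x} = h.toFinset.card := by
  rw [← Set.ncard_eq_toFinset_card _ h, ← Nat.card_coe_set_eq]
  rfl

lemma prime_divisors_finite {I : Ideal (𝓞 K)} (hI : I ≠ 0) :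
    {p : Ideal (𝓞 K) | p.IsPrime ∧ p ∣ I}.Finite := by
  refine (Ideal.finite_setOf_absNorm_le (Ideal.absNorm I)).subset ?_
  rintro p ⟨_, hd⟩
  exact Nat.le_of_dvd (Nat.pos_of_ne_zero (by simpa [Ideal.absNorm_eq_zero_iff] using hI))
    (Ideal.absNorm_dvd_absNorm_of_le (Ideal.le_of_dvd hd))

lemma prime_divisors_nonempty {I : Ideal (𝓞 K)} (hT : I ≠ ⊤) :
    {p : Ideal (𝓞 K) | p.IsPrime ∧ p ∣ I}.Nonempty := by
  obtain ⟨M, hM, hle⟩ := Ideal.exists_le_maximal I hT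
  exact ⟨M, hM.isPrime, Ideal.dvd_iff_le.mpr hle⟩

lemma maxNorm_mem {I : Ideal (𝓞 K)} (h0 : I ≠ 0) (hT : I ≠ ⊤) :
    ∃ p : Ideal (𝓞 K), p.IsPrime ∧ p ∣ I ∧ Ideal.absNorm p = maxNorm K I := by
  rw [maxNorm, if_neg hT]
  have hfin := (prime_divisors_finite h0).image Ideal.absNorm
  have hne := (prime_divisors_nonempty hT).image Ideal.absNorm
  obtain ⟨p, hp, hpn⟩ := Nat.sSup_mem hne hfin.bddAbove
  exact ⟨p, hp.1, hp.2, hpn⟩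

lemma le_maxNorm {I p : Ideal (𝓞 K)} (h0 : I ≠ 0) (hp : p.IsPrime) (hd : p ∣ I) :
    Ideal.absNorm p ≤ maxNorm K I := by
  have hT : I ≠ ⊤ := by
    rintro rfl
    exact hp.ne_top (top_le_iff.mp (Ideal.le_of_dvd hd))
  rw [maxNorm, if_neg hT]
  exact le_csSup ((prime_divisors_finite h0).image _).bddAbove ⟨p, ⟨hp, hd⟩, rfl⟩

lemma maxNorm_le {I : Ideal (𝓞 K)} {B : ℕ} (hB : 1 ≤ B)
    (h : ∀ p : Ideal (𝓞 K), p.IsPrime → p ∣ I → Ideal.absNorm p ≤ B) : maxNorm K I ≤ B := by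
  rw [maxNorm]
  split_ifs with hT
  · exact hB
  · refine csSup_le ((prime_divisors_nonempty hT).image _) ?_
    rintro n ⟨p, ⟨hp, hd⟩, rfl⟩
    exact h p hp hd

lemma ne_bot_of_dvd {p I : Ideal (𝓞 K)} (h0 : I ≠ 0) (h : p ∣ I) : p ≠ ⊥ := by
  rintro rfl
  rw [← Ideal.zero_eq_bot] at h
  exact h0 (zero_dvd_iff.mp h)

lemma two_le_absNorm_of_prime {p : Ideal (𝓞 K)} (hp : p.IsPrime) (hb : p ≠ ⊥) :
    2 ≤ Ideal.absNorm p := by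
  have h0 : Ideal.absNorm p ≠ 0 := by simpa [Ideal.absNorm_eq_zero_iff] using hb
  have h1 : Ideal.absNorm p ≠ 1 := by simpa [Ideal.absNorm_eq_one_iff] using hp.ne_top
  omega

lemma absNorm_span_natCast_s17 (K : Type) [Field K] [NumberField K] (m : ℕ) :
    Ideal.absNorm (Ideal.span {(m : 𝓞 K)}) = m ^ Module.finrank ℚ K := by
  rw [Ideal.absNorm_span_singleton,
    show ((m : ℕ) : 𝓞 K) = algebraMap ℤ (𝓞 K) (m : ℤ) by push_cast; rfl,
    Algebra.norm_algebraMap_of_basis (RingOfIntegers.basis K), Int.natAbs_pow, Int.natAbs_natCast]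
  congr 1
  rw [← NumberField.RingOfIntegers.rank K, Module.finrank_eq_card_basis (RingOfIntegers.basis K)]

lemma card_primes_norm_eq_le {n : ℕ} (hn : 2 ≤ n)
    (h : {q : Ideal (𝓞 K) | q.IsPrime ∧ Ideal.absNorm q = n}.Finite) :
    h.toFinset.card ≤ Module.finrank ℚ K := by
  set d := Module.finrank ℚ K with hd
  set ℓ := n.minFac with hℓdef
  have hℓ : ℓ.Prime := Nat.minFac_prime (by omega)
  have key : ∀ q ∈ h.toFinset, q ∣ Ideal.span {(ℓ : 𝓞 K)} ∧ ∃ j, j ≠ 0 ∧ n = ℓ ^ j := by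
    intro q hq
    rw [Set.Finite.mem_toFinset] at hq
    obtain ⟨hqp, hqn⟩ := hq
    have hmem : ((n : ℕ) : 𝓞 K) ∈ q := by rw [← hqn]; exact Ideal.absNorm_mem q
    have hprod : (((n.primeFactorsList).map (Nat.cast : ℕ → 𝓞 K) : List (𝓞 K)) :
        Multiset (𝓞 K)).prod ∈ q := by
      rw [Multiset.prod_coe, ← Nat.cast_list_prod, Nat.prod_primeFactorsList (by omega)]
      exact hmem
    obtain ⟨x, hxmem, hxq⟩ := (hqp.multiset_prod_mem_iff_exists_mem _).mp hprod
    rw [Multiset.mem_coe, List.mem_map] at hxmem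
    obtain ⟨ℓ', hℓ'mem, rfl⟩ := hxmem
    have hℓ'p : ℓ'.Prime := Nat.prime_of_mem_primeFactorsList hℓ'mem
    have hdvdspan : q ∣ Ideal.span {(ℓ' : 𝓞 K)} :=
      Ideal.dvd_iff_le.mpr ((Ideal.span_singleton_le_iff_mem q).mpr hxq)
    have hnd : n ∣ ℓ' ^ d := by
      have := Ideal.absNorm_dvd_absNorm_of_le (Ideal.le_of_dvd hdvdspan)
      rwa [hqn, absNorm_span_natCast_s17] at this
    obtain ⟨j, hjd, hnj⟩ := (Nat.dvd_prime_pow hℓ'p).mp hnd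
    have hj0 : j ≠ 0 := by rintro rfl; simp at hnj; omega
    have hℓeq : ℓ = ℓ' := by rw [hℓdef, hnj, hℓ'p.pow_minFac hj0]
    exact ⟨hℓeq ▸ hdvdspan, j, hj0, hℓeq ▸ hnj⟩
  rcases Finset.eq_empty_or_nonempty h.toFinset with he | ⟨q0, hq0⟩
  · simp [he]
  · obtain ⟨-, j, hj0, hnj⟩ := key q0 hq0
    have hprod_dvd : ∏ q ∈ h.toFinset, q ∣ Ideal.span {(ℓ : 𝓞 K)} := by
      refine Finset.prod_dvd_of_coprime ?_ fun q hq => (key q hq).1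
      intro q hq q' hq' hne
      rw [Finset.mem_coe, Set.Finite.mem_toFinset] at hq hq'
      have hqb : q ≠ ⊥ := by
        rintro rfl; simp only [Set.mem_setOf_eq, Ideal.absNorm_bot] at hq; omega
      have hq'b : q' ≠ ⊥ := by
        rintro rfl; simp only [Set.mem_setOf_eq, Ideal.absNorm_bot] at hq'; omega
      exact Ideal.isCoprime_iff_sup_eq.mpr
        ((hq.1.isMaximal hqb).coprime_of_ne (hq'.1.isMaximal hq'b) hne)
    have hdvd2 := Ideal.absNorm_dvd_absNorm_of_le (Ideal.le_of_dvd hprod_dvd)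
    rw [absNorm_span_natCast_s17, map_prod,
      Finset.prod_congr rfl (fun q hq => ((Set.Finite.mem_toFinset h).mp hq).2),
      Finset.prod_const] at hdvd2
    have hdvd3 : ℓ ^ (j * h.toFinset.card) ∣ ℓ ^ d := by
      rw [pow_mul, ← hnj]; exact hdvd2
    have hle := (Nat.pow_dvd_pow_iff_le_right hℓ.one_lt).mp hdvd3
    calc h.toFinset.card ≤ j * h.toFinset.card :=
        Nat.le_mul_of_pos_left _ (by omega)
      _ ≤ d := hle

set_option synthInstance.maxHeartbeats 1000000 in
lemma absNorm_mul' (I J : Ideal (𝓞 K)) :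
    Ideal.absNorm (I * J) = Ideal.absNorm I * Ideal.absNorm J :=
  _root_.map_mul Ideal.absNorm I J

lemma Pm_finite {I : Ideal (𝓞 K)} (h : I ≠ 0) :
    {p : Ideal (𝓞 K) | p.IsPrime ∧ p ∣ I ∧ Ideal.absNorm p = maxNorm K I}.Finite :=
  (prime_divisors_finite h).subset fun p hp => ⟨hp.1, hp.2.1⟩

/-- A choice of a prime divisor of maximal norm. -/
noncomputable def p0Aux (I : Ideal (𝓞 K)) : Ideal (𝓞 K) :=
  if h : ∃ p : Ideal (𝓞 K), p.IsPrime ∧ p ∣ I ∧ Ideal.absNorm p = maxNorm K I then h.choose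
  else ⊥

lemma p0Aux_spec {I : Ideal (𝓞 K)} (h0 : I ≠ 0) (hT : I ≠ ⊤) :
    (p0Aux I).IsPrime ∧ p0Aux I ∣ I ∧ Ideal.absNorm (p0Aux I) = maxNorm K I := by
  have hex := maxNorm_mem h0 hT
  rw [p0Aux, dif_pos hex]
  exact hex.choose_spec

/-- The finset of maximal-norm prime divisors of `I` other than the chosen one. -/
noncomputable def EAux (I : Ideal (𝓞 K)) : Finset (Ideal (𝓞 K)) :=
  if h : I ≠ 0 then (Pm_finite h).toFinset.erase (p0Aux I) else ∅

lemma EAux_mem {I : Ideal (𝓞 K)} (h0 : I ≠ 0) {q : Ideal (𝓞 K)} :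
    q ∈ EAux I ↔ q ≠ p0Aux I ∧ q.IsPrime ∧ q ∣ I ∧ Ideal.absNorm q = maxNorm K I := by
  rw [EAux, dif_pos h0, Finset.mem_erase, Set.Finite.mem_toFinset]
  exact Iff.rfl

lemma EAux_card {I : Ideal (𝓞 K)} (h0 : I ≠ 0) (hT : I ≠ ⊤) :
    (EAux I).card = Q K I - 1 := by
  have hQ : Q K I = (Pm_finite h0).toFinset.card := nat_card_subtype _ _
  rw [EAux, dif_pos h0,
    Finset.card_erase_of_mem (by rw [Set.Finite.mem_toFinset]; exact p0Aux_spec h0 hT), ← hQ]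

end Aux

theorem Q_excess_le (X : ℝ) (hX : 4 ≤ X) :
    (∑ᶠ I ∈ {I : Ideal (𝓞 K) | 2 ≤ Ideal.absNorm I ∧ (Ideal.absNorm I : ℝ) ≤ X ∧
        2 ≤ Q K I}, (Q K I - 1)) ≤
      Module.finrank ℚ K ^ 2 *
        ∑ᶠ p ∈ {p : Ideal (𝓞 K) | p.IsPrime ∧ p ≠ ⊥ ∧
            (Ideal.absNorm p : ℝ) ≤ Real.sqrt X},
          Psi K (X / (Ideal.absNorm p : ℝ) ^ 2) (Ideal.absNorm p : ℝ) := by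
  classical
  have hd1 : 1 ≤ Module.finrank ℚ K := Module.finrank_pos
  set d := Module.finrank ℚ K with hd_def
  have hSI : {I : Ideal (𝓞 K) | 2 ≤ Ideal.absNorm I ∧ (Ideal.absNorm I : ℝ) ≤ X ∧
      2 ≤ Q K I}.Finite :=
    (Ideal.finite_setOf_absNorm_le ⌊X⌋₊).subset fun I hI => Nat.le_floor hI.2.1
  have hSP : {p : Ideal (𝓞 K) | p.IsPrime ∧ p ≠ ⊥ ∧
      (Ideal.absNorm p : ℝ) ≤ Real.sqrt X}.Finite :=
    (Ideal.finite_setOf_absNorm_le ⌊Real.sqrt X⌋₊).subset fun p hp => Nat.le_floor hp.2.2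
  rw [← Set.Finite.coe_toFinset hSI, finsum_mem_coe_finset,
      ← Set.Finite.coe_toFinset hSP, finsum_mem_coe_finset]
  set s := hSI.toFinset with hs_def
  set t := hSP.toFinset with ht_def
  have hmem_s : ∀ I ∈ s, 2 ≤ Ideal.absNorm I ∧ (Ideal.absNorm I : ℝ) ≤ X ∧ 2 ≤ Q K I :=
    fun I hI => hSI.mem_toFinset.mp hI
  have hI0 : ∀ I ∈ s, I ≠ 0 := by
    intro I hI h
    have h2 := (hmem_s I hI).1
    rw [h, Ideal.zero_eq_bot, Ideal.absNorm_bot] at h2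
    omega
  have hIT : ∀ I ∈ s, I ≠ ⊤ := by
    intro I hI h
    have h2 := (hmem_s I hI).1
    rw [h, Ideal.absNorm_top] at h2
    omega
  have hLHS : ∑ I ∈ s, (Q K I - 1) = (s.sigma fun I => EAux I).card := by
    rw [Finset.card_sigma]
    exact (Finset.sum_congr rfl fun I hI => EAux_card (hI0 I hI) (hIT I hI)).symm
  -- facts about elements of the sigma set
  have hsig : ∀ I q : Ideal (𝓞 K), (⟨I, q⟩ : (_ : Ideal (𝓞 K)) × Ideal (𝓞 K)) ∈
      s.sigma (fun I => EAux I) → I ∈ s ∧ (p0Aux I).IsPrime ∧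
      p0Aux I ∣ I ∧ Ideal.absNorm (p0Aux I) = maxNorm K I ∧ q ≠ p0Aux I ∧
      q.IsPrime ∧ q ∣ I ∧ Ideal.absNorm q = maxNorm K I ∧
      p0Aux I * q ∣ I := by
    intro I q hx
    rw [Finset.mem_sigma] at hx
    obtain ⟨hIs, hqE⟩ := hx
    obtain ⟨hneq, hqp, hqd, hqn⟩ := (EAux_mem (hI0 I hIs)).mp hqE
    obtain ⟨hp0p, hp0d, hp0n⟩ := p0Aux_spec (hI0 I hIs) (hIT I hIs)
    have h0 := hI0 I hIs
    have hpb : p0Aux I ≠ ⊥ := ne_bot_of_dvd h0 hp0d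
    have hqb : q ≠ ⊥ := ne_bot_of_dvd h0 hqd
    have hcop : IsCoprime (p0Aux I) q := Ideal.isCoprime_iff_sup_eq.mpr
      ((hp0p.isMaximal hpb).coprime_of_ne (hqp.isMaximal hqb) (Ne.symm hneq))
    exact ⟨hIs, hp0p, hp0d, hp0n, hneq, hqp, hqd, hqn, hcop.mul_dvd hp0d hqd⟩
  have hmapsto : ∀ x ∈ s.sigma (fun I => EAux I), p0Aux x.1 ∈ t := by
    rintro ⟨I, q⟩ hx
    obtain ⟨hIs, hp0p, hp0d, hp0n, hneq, hqp, hqd, hqn, hpqd⟩ := hsig I q hx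
    have h0 := hI0 I hIs
    have hpb : p0Aux I ≠ ⊥ := ne_bot_of_dvd h0 hp0d
    have hNpos : 0 < Ideal.absNorm I := by have := (hmem_s I hIs).1; omega
    have hdvd : Ideal.absNorm (p0Aux I * q) ∣ Ideal.absNorm I :=
      Ideal.absNorm_dvd_absNorm_of_le (Ideal.le_of_dvd hpqd)
    rw [absNorm_mul', hp0n, hqn] at hdvd
    have hsq : maxNorm K I * maxNorm K I ≤ Ideal.absNorm I := Nat.le_of_dvd hNpos hdvd
    have h1 : ((maxNorm K I : ℝ)) * maxNorm K I ≤ (Ideal.absNorm I : ℝ) := by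
      exact_mod_cast hsq
    have hXle : ((Ideal.absNorm (p0Aux I) : ℝ)) ^ 2 ≤ X := by
      rw [hp0n, sq]
      exact h1.trans (hmem_s I hIs).2.1
    rw [ht_def, Set.Finite.mem_toFinset]
    refine ⟨hp0p, hpb, ?_⟩
    rw [show (Ideal.absNorm (p0Aux I) : ℝ) = Real.sqrt ((Ideal.absNorm (p0Aux I) : ℝ) ^ 2) from
      (Real.sqrt_sq (Nat.cast_nonneg _)).symm]
    exact Real.sqrt_le_sqrt hXle
  rw [hLHS, Finset.card_eq_sum_card_fiberwise hmapsto, Finset.mul_sum]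
  refine Finset.sum_le_sum ?_
  intro p hpt
  obtain ⟨hpp, hpb, hpsqrt⟩ := hSP.mem_toFinset.mp hpt
  have hn2 : 2 ≤ Ideal.absNorm p := two_le_absNorm_of_prime hpp hpb
  set n := Ideal.absNorm p with hn_def
  have hA : {q : Ideal (𝓞 K) | q.IsPrime ∧ Ideal.absNorm q = n}.Finite :=
    (Ideal.finite_setOf_absNorm_eq n).subset fun q hq => hq.2
  have hB : {J : Ideal (𝓞 K) | J ≠ 0 ∧ (Ideal.absNorm J : ℝ) ≤ X / (n : ℝ) ^ 2 ∧
      (maxNorm K J : ℝ) ≤ (n : ℝ)}.Finite :=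
    (Ideal.finite_setOf_absNorm_le ⌊X / (n : ℝ) ^ 2⌋₊).subset fun J hJ => Nat.le_floor hJ.2.1
  have hcardF : ((s.sigma fun I => EAux I).filter fun x => p0Aux x.1 = p).card ≤
      (hA.toFinset ×ˢ hB.toFinset).card := by
    refine Finset.card_le_card_of_injOn
      (fun x => (x.2, if h : p * x.2 ∣ x.1 then h.choose else 0)) ?_ ?_
    · rintro ⟨I, q⟩ hx
      rw [Finset.mem_coe, Finset.mem_filter] at hx
      obtain ⟨hxs, hxf⟩ := hx
      obtain ⟨hIs, hp0p, hp0d, hp0n, hneq, hqp, hqd, hqn, hpqd⟩ := hsig I q hxs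
      rw [hxf] at hpqd hp0n
      have hdvd : p * q ∣ I := hpqd
      have h0 := hI0 I hIs
      have hq_n : Ideal.absNorm q = n := by rw [hqn, hn_def]; exact hp0n.symm
      simp only [Finset.mem_coe, Finset.mem_product, dif_pos hdvd]
      constructor
      · rw [Set.Finite.mem_toFinset]
        exact ⟨hqp, hq_n⟩
      · rw [Set.Finite.mem_toFinset]
        have hJspec : I = p * q * hdvd.choose := hdvd.choose_spec
        have hJ0 : hdvd.choose ≠ 0 := by
          intro h
          rw [h, mul_zero] at hJspec
          exact h0 hJspec
        have hNI : Ideal.absNorm I = n * n * Ideal.absNorm hdvd.choose := by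
          have := congrArg Ideal.absNorm hJspec
          rwa [absNorm_mul', absNorm_mul', hq_n, ← hn_def] at this
        refine ⟨hJ0, ?_, ?_⟩
        · rw [le_div_iff₀ (by positivity : (0 : ℝ) < (n : ℝ) ^ 2)]
          calc (Ideal.absNorm hdvd.choose : ℝ) * (n : ℝ) ^ 2 = (Ideal.absNorm I : ℝ) := by
                rw [hNI]; push_cast; ring
            _ ≤ X := (hmem_s I hIs).2.1
        · have hmax : maxNorm K hdvd.choose ≤ n := by
            refine maxNorm_le (by omega) ?_
            intro r hr hrd
            have hJdvdI : hdvd.choose ∣ I := Dvd.intro_left _ hJspec.symm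
            have hrI : r ∣ I := dvd_trans hrd hJdvdI
            calc Ideal.absNorm r ≤ maxNorm K I := le_maxNorm h0 hr hrI
              _ = n := by rw [hn_def]; exact hp0n.symm
          exact_mod_cast hmax
    · rintro ⟨I, q⟩ hx ⟨I', q'⟩ hy hxy
      rw [Finset.mem_coe, Finset.mem_filter] at hx hy
      obtain ⟨hxs, hxf⟩ := hx
      obtain ⟨hys, hyf⟩ := hy
      obtain ⟨hIs, _, _, _, _, _, _, _, hpqd⟩ := hsig I q hxs
      obtain ⟨hIs', _, _, _, _, _, _, _, hpqd'⟩ := hsig I' q' hys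
      rw [hxf] at hpqd
      rw [hyf] at hpqd'
      have hdvd : p * q ∣ I := hpqd
      have hdvd' : p * q' ∣ I' := hpqd'
      simp only [dif_pos hdvd, dif_pos hdvd', Prod.mk.injEq] at hxy
      obtain ⟨hq, hJ⟩ := hxy
      have e1 : I = p * q * hdvd.choose := hdvd.choose_spec
      have e2 : I' = p * q' * hdvd'.choose := hdvd'.choose_spec
      have hI : I = I' := by rw [e1, e2, hJ, hq]
      subst hI
      subst hq
      rfl
  refine le_trans hcardF ?_
  rw [Finset.card_product]
  have h1 : hA.toFinset.card ≤ d := card_primes_norm_eq_le hn2 hA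
  have h2 : hB.toFinset.card = Psi K (X / (n : ℝ) ^ 2) (n : ℝ) :=
    (nat_card_subtype _ hB).symm
  calc hA.toFinset.card * hB.toFinset.card ≤ d * Psi K (X / (n : ℝ) ^ 2) (n : ℝ) :=
      Nat.mul_le_mul h1 h2.le
    _ ≤ d ^ 2 * Psi K (X / (n : ℝ) ^ 2) (n : ℝ) := by
      refine Nat.mul_le_mul_right _ ?_
      rw [pow_two]
      exact Nat.le_mul_of_pos_left _ hd1
end
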